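/- Let R be a ring with a homothetic datum (λ, ρ, s), and suppose the additive group of R has finite exponent N, i.e., N•a = 0 for all a ∈ R. Then the subset I_N = {(0, N·k) : k ∈ ℤ} of R × ℤ is a two-sided ideal of the homothetic extension ring R(σ,s): it is an additive subgroup and for all (a,k) ∈ R × ℤ and l ∈ ℤ, both (a,k)·(0,N·l) and (0,N·l)·(a,k) lie in I_N. -/

import Mathlib

/-- The homothetic extension product on `R × ℤ`. -/
def homotheticMul {R : Type*} [NonUnitalRing R] (lam rho : R →+ R) (s : R)
    (p q : R × ℤ) : R × ℤ :=
  (p.1 * q.1 + q.2 • rho p.1 + p.2 • lam q.1 + (p.2 * q.2) • s, p.2 * q.2)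

/-- If the additive group of `R` has finite exponent `N`, then
`I_N = {(0, N·k) : k ∈ ℤ}` is a two-sided ideal of the homothetic extension
ring `R(σ,s)` on `R × ℤ`. -/
theorem homothetic_extension_IN_ideal {R : Type*} [NonUnitalRing R]
    (lam rho : R →+ R) (s : R)
    (hlam : ∀ a b : R, lam (a * b) = lam a * b)
    (hrho : ∀ a b : R, rho (a * b) = a * rho b)
    (hmid : ∀ a b : R, a * lam b = rho a * b)
    (hperm : ∀ a : R, rho (lam a) = lam (rho a))
    (hs : lam s = rho s)
    (hll : ∀ a : R, lam (lam a) = lam a + s * a)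
    (hrr : ∀ a : R, rho (rho a) = rho a + a * s)
    (N : ℕ) (hN : ∀ a : R, N • a = 0) :
    (∃ k : ℤ, (0 : R × ℤ) = (0, (N : ℤ) * k)) ∧
    (∀ x y : R × ℤ, (∃ k : ℤ, x = (0, (N : ℤ) * k)) → (∃ k : ℤ, y = (0, (N : ℤ) * k)) →
      ∃ k : ℤ, x + y = (0, (N : ℤ) * k)) ∧
    (∀ x : R × ℤ, (∃ k : ℤ, x = (0, (N : ℤ) * k)) → ∃ k : ℤ, -x = (0, (N : ℤ) * k)) ∧
    (∀ (p : R × ℤ) (l : ℤ),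
      (∃ k : ℤ, homotheticMul lam rho s p (0, (N : ℤ) * l) = (0, (N : ℤ) * k)) ∧
      (∃ k : ℤ, homotheticMul lam rho s (0, (N : ℤ) * l) p = (0, (N : ℤ) * k))) := by
  have key : ∀ (m : ℤ) (a : R), ((N : ℤ) * m) • a = 0 := by
    intro m a
    rw [mul_comm, mul_smul, natCast_zsmul, hN, smul_zero]
  have key' : ∀ (m : ℤ) (a : R), (m * (N : ℤ)) • a = 0 := fun m a => by
    rw [mul_comm]; exact key m a
  refine ⟨⟨0, by simp [Prod.ext_iff]⟩, ?_, ?_, ?_⟩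
  · rintro x y ⟨k, rfl⟩ ⟨j, rfl⟩
    exact ⟨k + j, by simp [Prod.ext_iff, mul_add]⟩
  · rintro x ⟨k, rfl⟩
    exact ⟨-k, by simp [Prod.ext_iff]⟩
  · intro p l
    constructor
    · refine ⟨p.2 * l, ?_⟩
      simp [homotheticMul, Prod.ext_iff, key, key', mul_smul, hN, natCast_zsmul, mul_assoc, mul_comm, mul_left_comm]
    · refine ⟨l * p.2, ?_⟩
      simp [homotheticMul, Prod.ext_iff, key, key', mul_smul, hN, natCast_zsmul, mul_assoc, mul_comm, mul_left_comm]
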